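/- For a, b ∈ ℤ define the operator μ_{a,b} := q·t·𝓜_{a−3}∘𝓜_b − (t² + q²·t + q)·𝓜_{a−2}∘𝓜_{b−1} + (q·t² + t + q²)·𝓜_{a−1}∘𝓜_{b−2} − q·t·𝓜_a∘𝓜_{b−3} on K. Then μ_{a,b} = −μ_{b,a} for all a, b ∈ ℤ. (This is the componentwise form of the quadratic exchange relation g(z,w)·𝔢(z)𝔢(w) + g(w,z)·𝔢(w)𝔢(z) = 0, with g(z,w) = (z−qw)(z−t⁻¹w)(z−q⁻¹tw), satisfied by the generating current of the operators 𝓜ₙ.) -/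

import Mathlib

open scoped BigOperators

noncomputable section

/-- The field `F(x₁,…,x_N)` of rational functions in `N` variables over `F`. -/
abbrev RatF (F : Type) [Field F] (N : ℕ) : Type :=
  FractionRing (MvPolynomial (Fin N) F)

/-- The variable `xᵢ` viewed inside the rational function field. -/
noncomputable def Xv (F : Type) [Field F] (N : ℕ) (i : Fin N) : RatF F N :=
  algebraMap (MvPolynomial (Fin N) F) (RatF F N) (MvPolynomial.X i)

/-- The generalized Macdonald operator `𝓜ₙ`:
`𝓜ₙ f = Σᵢ xᵢⁿ · (Πⱼ≠ᵢ (t·xᵢ − xⱼ)/(xᵢ − xⱼ)) · Γᵢ(f)`. -/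
noncomputable def Mac (F : Type) [Field F] (N : ℕ) (t : F)
    (Γ : Fin N → (RatF F N ≃ₐ[F] RatF F N)) (n : ℤ) (f : RatF F N) : RatF F N :=
  ∑ i : Fin N, Xv F N i ^ n *
    (∏ j ∈ Finset.univ.erase i, (t • Xv F N i - Xv F N j) / (Xv F N i - Xv F N j)) *
    Γ i f

section AuxLemmas

variable {K : Type} [Field K]

set_option maxHeartbeats 1000000 in
lemma core_poly (Q T u v : K)
    (huv : u - v ≠ 0) (h1 : v - Q*u ≠ 0) (h2 : u - Q*v ≠ 0) :
    (T*u-v)/(u-v) * ((T*v-Q*u)/(v-Q*u)) *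
      (Q*T*v^3 - (T^2+Q^2*T+Q)*u*v^2 + (Q*T^2+T+Q^2)*u^2*v - Q*T*u^3)
    = -((T*v-u)/(v-u) * ((T*u-Q*v)/(u-Q*v)) *
      (Q*T*u^3 - (T^2+Q^2*T+Q)*v*u^2 + (Q*T^2+T+Q^2)*v^2*u - Q*T*v^3)) := by
  have hvu : v - u ≠ 0 := fun h => huv (by linear_combination -h)
  rw [div_mul_div_comm, div_mul_div_comm, div_mul_eq_mul_div, div_mul_eq_mul_div,
    ← neg_div, div_eq_div_iff (mul_ne_zero huv h1) (mul_ne_zero hvu h2)]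
  ring

lemma zpow_step (w : K) (hw : w ≠ 0) (c : ℤ) :
    w ^ c = w ^ (c-3) * w ^ 3 ∧ w ^ (c-1) = w ^ (c-3) * w ^ 2 ∧ w ^ (c-2) = w ^ (c-3) * w := by
  refine ⟨?_, ?_, ?_⟩
  · calc w^c = w^((c-3)+3) := by congr 1; ring
      _ = w^(c-3) * w^(3:ℤ) := zpow_add₀ hw _ _
      _ = w^(c-3) * w^3 := by norm_cast
  · calc w^(c-1) = w^((c-3)+2) := by congr 1; ring
      _ = w^(c-3) * w^(2:ℤ) := zpow_add₀ hw _ _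
      _ = w^(c-3) * w^2 := by norm_cast
  · calc w^(c-2) = w^((c-3)+1) := by congr 1; ring
      _ = w^(c-3) * w^(1:ℤ) := zpow_add₀ hw _ _
      _ = w^(c-3) * w := by rw [zpow_one]

set_option maxHeartbeats 1000000 in
lemma pair_aux (Q T u v p r G : K) (hu : u ≠ 0) (hv : v ≠ 0)
    (huv : u - v ≠ 0) (h1 : v - Q*u ≠ 0) (h2 : u - Q*v ≠ 0) (a b : ℤ) :
    Q*T * (u^(a-3) * ((T*u - v)/(u - v) * p) * (v^b * ((T*v - Q*u)/(v - Q*u) * r) * G))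
      - (T^2+Q^2*T+Q) * (u^(a-2) * ((T*u - v)/(u - v) * p) *
          (v^(b-1) * ((T*v - Q*u)/(v - Q*u) * r) * G))
      + (Q*T^2+T+Q^2) * (u^(a-1) * ((T*u - v)/(u - v) * p) *
          (v^(b-2) * ((T*v - Q*u)/(v - Q*u) * r) * G))
      - Q*T * (u^a * ((T*u - v)/(u - v) * p) * (v^(b-3) * ((T*v - Q*u)/(v - Q*u) * r) * G))
    = -( Q*T * (v^(b-3) * ((T*v - u)/(v - u) * r) * (u^a * ((T*u - Q*v)/(u - Q*v) * p) * G))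
      - (T^2+Q^2*T+Q) * (v^(b-2) * ((T*v - u)/(v - u) * r) *
          (u^(a-1) * ((T*u - Q*v)/(u - Q*v) * p) * G))
      + (Q*T^2+T+Q^2) * (v^(b-1) * ((T*v - u)/(v - u) * r) *
          (u^(a-2) * ((T*u - Q*v)/(u - Q*v) * p) * G))
      - Q*T * (v^b * ((T*v - u)/(v - u) * r) * (u^(a-3) * ((T*u - Q*v)/(u - Q*v) * p) * G)) ) := by
  obtain ⟨hu0, hu1, hu2⟩ := zpow_step u hu a
  obtain ⟨hv0, hv1, hv2⟩ := zpow_step v hv b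
  rw [hu0, hu1, hu2, hv0, hv1, hv2]
  linear_combination (u^(a-3) * v^(b-3) * p * r * G) * core_poly Q T u v huv h1 h2

set_option maxHeartbeats 1000000 in
lemma diag_aux (Q T u D E G : K) (hQ : Q ≠ 0) (hu : u ≠ 0) (a b : ℤ) :
    Q*T * (u^(a-3) * D * ((Q*u)^b * E * G))
      - (T^2+Q^2*T+Q) * (u^(a-2) * D * ((Q*u)^(b-1) * E * G))
      + (Q*T^2+T+Q^2) * (u^(a-1) * D * ((Q*u)^(b-2) * E * G))
      - Q*T * (u^a * D * ((Q*u)^(b-3) * E * G)) = 0 := by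
  obtain ⟨hu0, hu1, hu2⟩ := zpow_step u hu a
  obtain ⟨hQu0, hQu1, hQu2⟩ := zpow_step (Q*u) (mul_ne_zero hQ hu) b
  rw [hu0, hu1, hu2, hQu0, hQu1, hQu2, mul_zpow]
  ring

end AuxLemmas

set_option maxHeartbeats 4000000 in
/-- the exchange relation `μ_{a,b} = −μ_{b,a}` for the operators
`μ_{a,b} = qt·𝓜_{a−3}𝓜_b − (t²+q²t+q)·𝓜_{a−2}𝓜_{b−1} + (qt²+t+q²)·𝓜_{a−1}𝓜_{b−2} − qt·𝓜_a𝓜_{b−3}`. -/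
theorem statement2 (F : Type) [Field F] [CharZero F] (q t : F) (hq : q ≠ 0) (ht : t ≠ 0)
    (N : ℕ) (hN : 1 ≤ N)
    (Γ : Fin N → (RatF F N ≃ₐ[F] RatF F N))
    (hΓ : ∀ i j : Fin N, Γ i (Xv F N j) = if j = i then q • Xv F N j else Xv F N j)
    (a b : ℤ) (f : RatF F N) :
    ((q * t) • Mac F N t Γ (a - 3) (Mac F N t Γ b f)
        - (t ^ 2 + q ^ 2 * t + q) • Mac F N t Γ (a - 2) (Mac F N t Γ (b - 1) f)
        + (q * t ^ 2 + t + q ^ 2) • Mac F N t Γ (a - 1) (Mac F N t Γ (b - 2) f)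
        - (q * t) • Mac F N t Γ a (Mac F N t Γ (b - 3) f))
      = -((q * t) • Mac F N t Γ (b - 3) (Mac F N t Γ a f)
        - (t ^ 2 + q ^ 2 * t + q) • Mac F N t Γ (b - 2) (Mac F N t Γ (a - 1) f)
        + (q * t ^ 2 + t + q ^ 2) • Mac F N t Γ (b - 1) (Mac F N t Γ (a - 2) f)
        - (q * t) • Mac F N t Γ b (Mac F N t Γ (a - 3) f)) := by
  classical
  set x : Fin N → RatF F N := Xv F N with hxdef
  set A : Fin N → RatF F N :=
    fun i => ∏ j ∈ Finset.univ.erase i, (t • x i - x j) / (x i - x j) with hAdef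
  -- basic nonvanishing facts
  have hinj : Function.Injective
      (algebraMap (MvPolynomial (Fin N) F) (RatF F N)) :=
    IsFractionRing.injective _ _
  have hxne : ∀ i : Fin N, x i ≠ 0 := by
    intro i h
    exact MvPolynomial.X_ne_zero i (hinj (by simpa [hxdef, Xv] using h))
  have hgen : ∀ (i j : Fin N) (c : F), j ≠ i → x i - c • x j ≠ 0 := by
    intro i j c hji h
    have h2 : (MvPolynomial.X i - MvPolynomial.C c * MvPolynomial.X j :
        MvPolynomial (Fin N) F) = 0 := by
      apply hinj
      rw [map_sub, map_mul, map_zero, ← MvPolynomial.algebraMap_eq, ← IsScalarTower.algebraMap_apply]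
      simpa [hxdef, Xv, Algebra.smul_def, ← IsScalarTower.algebraMap_apply] using h
    have h3 := congrArg (MvPolynomial.eval (fun k => if k = i then (1:F) else 0)) h2
    simp [MvPolynomial.eval_X, hji] at h3
  have hsub : ∀ i j : Fin N, j ≠ i → x i - x j ≠ 0 := by
    intro i j hji
    have := hgen i j 1 hji
    simpa using this
  -- commutation of the Γ's
  have hcomm : ∀ (i j : Fin N) (g : RatF F N), Γ i (Γ j g) = Γ j (Γ i g) := by
    intro i j g
    set R : Fin N → (RatF F N →+* RatF F N) :=
      fun i => ((Γ i : RatF F N ≃+* RatF F N) : RatF F N →+* RatF F N) with hRdef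
    have hR : ∀ (i : Fin N) (y : RatF F N), R i y = Γ i y := fun _ _ => rfl
    have hext : (R i).comp (R j) = (R j).comp (R i) := by
      apply IsLocalization.ringHom_ext (nonZeroDivisors (MvPolynomial (Fin N) F))
      apply MvPolynomial.ringHom_ext
      · intro c
        have hc : (algebraMap (MvPolynomial (Fin N) F) (RatF F N)) (MvPolynomial.C c)
            = algebraMap F (RatF F N) c := by
          rw [← MvPolynomial.algebraMap_eq, ← IsScalarTower.algebraMap_apply]
        simp only [RingHom.coe_comp, Function.comp_apply, hc, hR, AlgEquiv.commutes]
      · intro k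
        have hXk : (algebraMap (MvPolynomial (Fin N) F) (RatF F N)) (MvPolynomial.X k)
            = x k := rfl
        simp only [RingHom.coe_comp, Function.comp_apply, hR, hXk]
        rw [hΓ j k, hΓ i k]
        rcases eq_or_ne k i with rfl | hki <;> rcases eq_or_ne k j with rfl | hkj <;>
          simp_all [hΓ, Algebra.smul_def, map_mul, mul_assoc, mul_comm, mul_left_comm]
    have h2 := RingHom.congr_fun hext g
    simp only [RingHom.coe_comp, Function.comp_apply, hR] at h2
    exact h2
  -- expansion of a double Macdonald operator
  have hMM : ∀ (n m : ℤ), Mac F N t Γ n (Mac F N t Γ m f)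
      = ∑ i : Fin N, ∑ j : Fin N,
          x i ^ n * A i * ((Γ i (x j)) ^ m * Γ i (A j) * Γ i (Γ j f)) := by
    intro n m
    show (∑ i : Fin N, x i ^ n * A i * Γ i (∑ j : Fin N, x j ^ m * A j * Γ j f)) = _
    refine Finset.sum_congr rfl fun i _ => ?_
    rw [map_sum, Finset.mul_sum]
    refine Finset.sum_congr rfl fun j _ => ?_
    rw [map_mul, map_mul, map_zpow₀]
  have hQ0 : (algebraMap F (RatF F N)) q ≠ 0 :=
    fun h => hq ((algebraMap F (RatF F N)).injective (by rw [h, map_zero]))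
  have hAsplit : ∀ i j : Fin N, j ≠ i → A i
      = (t • x i - x j)/(x i - x j)
        * ∏ k ∈ (Finset.univ.erase i).erase j, (t • x i - x k)/(x i - x k) :=
    fun i j hji =>
      (Finset.mul_prod_erase _ _ (Finset.mem_erase.2 ⟨hji, Finset.mem_univ j⟩)).symm
  have hGA : ∀ i j : Fin N, ¬ i = j → Γ i (A j)
      = (t • x j - q • x i)/(x j - q • x i)
        * ∏ k ∈ (Finset.univ.erase i).erase j, (t • x j - x k)/(x j - x k) := by
    intro i j hij
    have hji : ¬ j = i := fun h => hij h.symm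
    have hi_mem : i ∈ Finset.univ.erase j := Finset.mem_erase.2 ⟨hij, Finset.mem_univ i⟩
    have expand : A j = ∏ k ∈ Finset.univ.erase j, (t • x j - x k)/(x j - x k) := rfl
    have step : ∀ k ∈ Finset.univ.erase j, Γ i ((t • x j - x k)/(x j - x k))
        = (t • x j - Γ i (x k))/(x j - Γ i (x k)) := by
      intro k _
      rw [map_div₀, map_sub, map_sub, Algebra.smul_def, map_mul, AlgEquiv.commutes, hΓ i j, if_neg hji]
    rw [expand, map_prod, Finset.prod_congr rfl step,
      ← Finset.mul_prod_erase _ _ hi_mem, hΓ i i, if_pos rfl]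
    congr 1
    refine Finset.prod_congr Finset.erase_right_comm fun k hk => ?_
    have hki : ¬ k = i := (Finset.mem_erase.1 (Finset.mem_erase.1 hk).2).1
    rw [hΓ i k, if_neg hki]
  -- reduce to a pointwise identity
  have key : ∀ i j : Fin N,
      ((q*t) • (x i ^ (a-3) * A i * ((Γ i (x j)) ^ b * Γ i (A j) * Γ i (Γ j f)))
        - (t^2+q^2*t+q) • (x i ^ (a-2) * A i *
            ((Γ i (x j)) ^ (b-1) * Γ i (A j) * Γ i (Γ j f)))
        + (q*t^2+t+q^2) • (x i ^ (a-1) * A i *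
            ((Γ i (x j)) ^ (b-2) * Γ i (A j) * Γ i (Γ j f)))
        - (q*t) • (x i ^ a * A i * ((Γ i (x j)) ^ (b-3) * Γ i (A j) * Γ i (Γ j f))))
      = -((q*t) • (x j ^ (b-3) * A j * ((Γ j (x i)) ^ a * Γ j (A i) * Γ j (Γ i f)))
        - (t^2+q^2*t+q) • (x j ^ (b-2) * A j *
            ((Γ j (x i)) ^ (a-1) * Γ j (A i) * Γ j (Γ i f)))
        + (q*t^2+t+q^2) • (x j ^ (b-1) * A j *
            ((Γ j (x i)) ^ (a-2) * Γ j (A i) * Γ j (Γ i f)))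
        - (q*t) • (x j ^ b * A j * ((Γ j (x i)) ^ (a-3) * Γ j (A i) * Γ j (Γ i f)))) := by
    intro i j
    by_cases hij : i = j
    · subst hij
      rw [hΓ i i, if_pos rfl]
      simp only [Algebra.smul_def, map_add, map_mul, map_pow]
      linear_combination
        diag_aux (algebraMap F (RatF F N) q) (algebraMap F (RatF F N) t) (x i) (A i)
          (Γ i (A i)) (Γ i (Γ i f)) hQ0 (hxne i) a b
        + diag_aux (algebraMap F (RatF F N) q) (algebraMap F (RatF F N) t) (x i) (A i)
          (Γ i (A i)) (Γ i (Γ i f)) hQ0 (hxne i) b a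
    · have hji : ¬ j = i := fun h => hij h.symm
      have h1 : x j - (algebraMap F (RatF F N)) q * x i ≠ 0 := by
        have := hgen j i q hij
        rwa [Algebra.smul_def] at this
      have h2 : x i - (algebraMap F (RatF F N)) q * x j ≠ 0 := by
        have := hgen i j q hji
        rwa [Algebra.smul_def] at this
      rw [hΓ i j, if_neg hji, hΓ j i, if_neg hij, hcomm j i f,
        hGA i j hij, hGA j i hji, hAsplit i j hji, hAsplit j i hij,
        show (Finset.univ.erase j).erase i = (Finset.univ.erase i).erase j from
          Finset.erase_right_comm]
      simp only [Algebra.smul_def, map_add, map_mul, map_pow]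
      linear_combination
        pair_aux (algebraMap F (RatF F N) q) (algebraMap F (RatF F N) t) (x i) (x j)
          (∏ k ∈ (Finset.univ.erase i).erase j,
            ((algebraMap F (RatF F N)) t * x i - x k)/(x i - x k))
          (∏ k ∈ (Finset.univ.erase i).erase j,
            ((algebraMap F (RatF F N)) t * x j - x k)/(x j - x k))
          (Γ i (Γ j f)) (hxne i) (hxne j) (hsub i j hji) h1 h2 a b
  calc ((q * t) • Mac F N t Γ (a - 3) (Mac F N t Γ b f)
        - (t ^ 2 + q ^ 2 * t + q) • Mac F N t Γ (a - 2) (Mac F N t Γ (b - 1) f)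
        + (q * t ^ 2 + t + q ^ 2) • Mac F N t Γ (a - 1) (Mac F N t Γ (b - 2) f)
        - (q * t) • Mac F N t Γ a (Mac F N t Γ (b - 3) f))
      = ∑ i : Fin N, ∑ j : Fin N,
          ((q*t) • (x i ^ (a-3) * A i * ((Γ i (x j)) ^ b * Γ i (A j) * Γ i (Γ j f)))
          - (t^2+q^2*t+q) • (x i ^ (a-2) * A i *
              ((Γ i (x j)) ^ (b-1) * Γ i (A j) * Γ i (Γ j f)))
          + (q*t^2+t+q^2) • (x i ^ (a-1) * A i *
              ((Γ i (x j)) ^ (b-2) * Γ i (A j) * Γ i (Γ j f)))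
          - (q*t) • (x i ^ a * A i * ((Γ i (x j)) ^ (b-3) * Γ i (A j) * Γ i (Γ j f)))) := by
        simp only [hMM, Finset.smul_sum, ← Finset.sum_sub_distrib, ← Finset.sum_add_distrib]
    _ = ∑ i : Fin N, ∑ j : Fin N,
        -((q*t) • (x j ^ (b-3) * A j * ((Γ j (x i)) ^ a * Γ j (A i) * Γ j (Γ i f)))
          - (t^2+q^2*t+q) • (x j ^ (b-2) * A j *
              ((Γ j (x i)) ^ (a-1) * Γ j (A i) * Γ j (Γ i f)))
          + (q*t^2+t+q^2) • (x j ^ (b-1) * A j *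
              ((Γ j (x i)) ^ (a-2) * Γ j (A i) * Γ j (Γ i f)))
          - (q*t) • (x j ^ b * A j * ((Γ j (x i)) ^ (a-3) * Γ j (A i) * Γ j (Γ i f)))) :=
        Finset.sum_congr rfl fun i _ => Finset.sum_congr rfl fun j _ => key i j
    _ = -((q * t) • Mac F N t Γ (b - 3) (Mac F N t Γ a f)
        - (t ^ 2 + q ^ 2 * t + q) • Mac F N t Γ (b - 2) (Mac F N t Γ (a - 1) f)
        + (q * t ^ 2 + t + q ^ 2) • Mac F N t Γ (b - 1) (Mac F N t Γ (a - 2) f)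
        - (q * t) • Mac F N t Γ b (Mac F N t Γ (a - 3) f)) := by
        rw [Finset.sum_comm]
        simp only [hMM, Finset.smul_sum, ← Finset.sum_sub_distrib, ← Finset.sum_add_distrib,
          ← Finset.sum_neg_distrib]

end
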